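/- Let a₁ ∈ ℝ∖{0} and a₂,a₃ ∈ ℂ∖{0} with a₂·a₃ ∈ ℝ, and let Q := Q_{a₁,a₂,a₃}. Let Q̄ denote the polynomial with complex-conjugated coefficients (so Q̄ = Q_{a₁,conj(a₂),conj(a₃)}). Then Q̄(−z, i·y, x) = Q(x,y,z) as polynomials; consequently the projective transformation μ(x:y:z) = (−z : i·y : x) maps the zero locus of Q in ℙ²(ℂ) bijectively onto the zero locus of Q̄. -/

import Mathlib

open MvPolynomial Matrix Complex

noncomputable section

/-- The quartic polynomial F_{a,b,c}. -/
def quarticF (a b c : ℂ) : MvPolynomial (Fin 3) ℂ :=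
  X 0 ^ 4 + X 1 ^ 4 + X 2 ^ 4 + C a * X 0 ^ 2 * X 1 ^ 2 +
    C b * X 0 ^ 2 * X 2 ^ 2 + C c * X 1 ^ 2 * X 2 ^ 2

/-- Smoothness of a plane curve. -/
def IsSmoothPlaneCurve (P : MvPolynomial (Fin 3) ℂ) : Prop :=
  ¬ ∃ v : Fin 3 → ℂ, v ≠ 0 ∧ eval v P = 0 ∧ ∀ i : Fin 3, eval v (pderiv i P) = 0

/-- The zero locus in ℙ²(ℂ). -/
def zeroLocus (P : MvPolynomial (Fin 3) ℂ) : Set (Projectivization ℂ (Fin 3 → ℂ)) :=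
  {p | eval p.rep P = 0}

/-- The projective action of an invertible matrix on ℙ²(ℂ). -/
def projAction (A : GL (Fin 3) ℂ) (p : Projectivization ℂ (Fin 3 → ℂ)) :
    Projectivization ℂ (Fin 3 → ℂ) :=
  Projectivization.mk ℂ ((A : Matrix (Fin 3) (Fin 3) ℂ) *ᵥ p.rep) (by
    intro h
    apply p.rep_nonzero
    have h2 := congrArg (fun w => ((A⁻¹ : GL (Fin 3) ℂ) : Matrix (Fin 3) (Fin 3) ℂ) *ᵥ w) h
    simp only [Matrix.mulVec_mulVec] at h2
    have h3 : ((A⁻¹ : GL (Fin 3) ℂ) : Matrix (Fin 3) (Fin 3) ℂ) *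
        ((A : GL (Fin 3) ℂ) : Matrix (Fin 3) (Fin 3) ℂ) = 1 := by
      exact_mod_cast A.inv_mul
    rw [h3] at h2
    simpa using h2)

/-- `A` maps `S` bijectively onto `T` via its projective action. -/
def MapsOnto (A : GL (Fin 3) ℂ)
    (S T : Set (Projectivization ℂ (Fin 3 → ℂ))) : Prop :=
  Set.BijOn (projAction A) S T

/-- The quartic `Q_{a₁,a₂,a₃}` (with `a₁` real). -/
def quarticQ (a₁ : ℝ) (a₂ a₃ : ℂ) : MvPolynomial (Fin 3) ℂ :=
  X 1 ^ 4 +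
    X 1 ^ 2 * ((X 0 - C (a₁ : ℂ) * X 2) * (X 0 + C ((a₁ : ℂ))⁻¹ * X 2)) +
    (X 0 - C a₂ * X 2) * (X 0 + C (((starRingEnd ℂ) a₂))⁻¹ * X 2) *
      (X 0 - C a₃ * X 2) * (X 0 + C (((starRingEnd ℂ) a₃))⁻¹ * X 2)

/-- The projective transformation `μ(x:y:z) = (−z : iy : x)` as an element of `GL₃(ℂ)`. -/
def muGL : GL (Fin 3) ℂ :=
  ⟨!![0, 0, -1; 0, Complex.I, 0; 1, 0, 0], !![0, 0, 1; 0, -Complex.I, 0; -1, 0, 0],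
    by
      ext i j
      fin_cases i <;> fin_cases j <;>
        simp [Matrix.mul_apply, Fin.sum_univ_succ, Matrix.one_apply, Complex.I_mul_I],
    by
      ext i j
      fin_cases i <;> fin_cases j <;>
        simp [Matrix.mul_apply, Fin.sum_univ_succ, Matrix.one_apply, Complex.I_mul_I]⟩


lemma eval_quarticQ' (a₁ : ℝ) (a₂ a₃ : ℂ) (v : Fin 3 → ℂ) :
    eval v (quarticQ a₁ a₂ a₃) =
      v 1 ^ 4 + v 1 ^ 2 * ((v 0 - a₁ * v 2) * (v 0 + (a₁:ℂ)⁻¹ * v 2)) +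
      (v 0 - a₂ * v 2) * (v 0 + ((starRingEnd ℂ) a₂)⁻¹ * v 2) *
        (v 0 - a₃ * v 2) * (v 0 + ((starRingEnd ℂ) a₃)⁻¹ * v 2) := by
  simp [quarticQ]

lemma eval_smul_quarticQ' (a₁ : ℝ) (a₂ a₃ : ℂ) (c : ℂ) (v : Fin 3 → ℂ) :
    eval (c • v) (quarticQ a₁ a₂ a₃) = c ^ 4 * eval v (quarticQ a₁ a₂ a₃) := by
  rw [eval_quarticQ', eval_quarticQ']
  simp only [Pi.smul_apply, smul_eq_mul]
  ring

lemma mem_zeroLocus_mk' (a₁ : ℝ) (a₂ a₃ : ℂ) (v : Fin 3 → ℂ) (hv : v ≠ 0) :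
    Projectivization.mk ℂ v hv ∈ zeroLocus (quarticQ a₁ a₂ a₃) ↔
      eval v (quarticQ a₁ a₂ a₃) = 0 := by
  obtain ⟨c, hcv⟩ := Projectivization.exists_smul_eq_mk_rep ℂ v hv
  have hrep : (Projectivization.mk ℂ v hv).rep = (c : ℂ) • v := by
    rw [← hcv]; rfl
  have hmem : Projectivization.mk ℂ v hv ∈ zeroLocus (quarticQ a₁ a₂ a₃) ↔
      eval (Projectivization.mk ℂ v hv).rep (quarticQ a₁ a₂ a₃) = 0 := Iff.rfl
  rw [hmem, hrep, eval_smul_quarticQ', mul_eq_zero]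
  simp [Units.ne_zero c]

lemma mulVec_ne_zero' (A : GL (Fin 3) ℂ) {v : Fin 3 → ℂ} (hv : v ≠ 0) :
    (A : Matrix (Fin 3) (Fin 3) ℂ) *ᵥ v ≠ 0 := by
  intro h
  apply hv
  have h2 := congrArg (fun w => ((A⁻¹ : GL (Fin 3) ℂ) : Matrix (Fin 3) (Fin 3) ℂ) *ᵥ w) h
  simp only [Matrix.mulVec_mulVec] at h2
  have h3 : ((A⁻¹ : GL (Fin 3) ℂ) : Matrix (Fin 3) (Fin 3) ℂ) *
      ((A : GL (Fin 3) ℂ) : Matrix (Fin 3) (Fin 3) ℂ) = 1 := by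
    exact_mod_cast A.inv_mul
  rw [h3] at h2
  simpa using h2

lemma projAction_mk' (A : GL (Fin 3) ℂ) (v : Fin 3 → ℂ) (hv : v ≠ 0) :
    projAction A (Projectivization.mk ℂ v hv) =
      Projectivization.mk ℂ ((A : Matrix (Fin 3) (Fin 3) ℂ) *ᵥ v) (mulVec_ne_zero' A hv) := by
  obtain ⟨c, hcv⟩ := Projectivization.exists_smul_eq_mk_rep ℂ v hv
  unfold projAction
  rw [Projectivization.mk_eq_mk_iff]
  refine ⟨c, ?_⟩
  rw [← hcv]
  rw [Units.smul_def, Units.smul_def, Matrix.mulVec_smul]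

lemma projAction_inv_self' (A : GL (Fin 3) ℂ) (p : Projectivization ℂ (Fin 3 → ℂ)) :
    projAction A⁻¹ (projAction A p) = p := by
  induction p using Projectivization.ind with
  | h v hv =>
    rw [projAction_mk', projAction_mk']
    rw [Projectivization.mk_eq_mk_iff]
    refine ⟨1, ?_⟩
    have h3 : ((A⁻¹ : GL (Fin 3) ℂ) : Matrix (Fin 3) (Fin 3) ℂ) *
        ((A : GL (Fin 3) ℂ) : Matrix (Fin 3) (Fin 3) ℂ) = 1 := by
      exact_mod_cast A.inv_mul
    rw [one_smul, Matrix.mulVec_mulVec, h3, Matrix.one_mulVec]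

lemma eval_bind_mu' (P : MvPolynomial (Fin 3) ℂ) (v : Fin 3 → ℂ) :
    eval v (MvPolynomial.bind₁
        ![-(X 2 : MvPolynomial (Fin 3) ℂ), C Complex.I * X 1, X 0] P) =
      eval ![-(v 2), Complex.I * v 1, v 0] P := by
  have he : ∀ (w : Fin 3 → ℂ) (p : MvPolynomial (Fin 3) ℂ), aeval w p = eval w p :=
    fun w p => rfl
  have h := MvPolynomial.aeval_bind₁ (R := ℂ) v
      ![-(X 2 : MvPolynomial (Fin 3) ℂ), C Complex.I * X 1, X 0] P
  rw [← he, h, he]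
  have hfun : (fun i => aeval v (![-(X 2 : MvPolynomial (Fin 3) ℂ), C Complex.I * X 1, X 0] i))
      = ![-(v 2), Complex.I * v 1, v 0] := by
    funext i; fin_cases i <;> simp
  rw [hfun]

lemma part1' (a₁ : ℝ) (a₂ a₃ : ℂ) :
    MvPolynomial.map (starRingEnd ℂ) (quarticQ a₁ a₂ a₃) =
      quarticQ a₁ ((starRingEnd ℂ) a₂) ((starRingEnd ℂ) a₃) := by
  simp [quarticQ, map_inv₀, Complex.conj_ofReal]

lemma part2' (a₁ : ℝ) (ha₁ : a₁ ≠ 0) (a₂ a₃ : ℂ) (ha₂ : a₂ ≠ 0) (ha₃ : a₃ ≠ 0)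
    (hreal : a₂ * a₃ ∈ Set.range ((↑) : ℝ → ℂ)) :
    MvPolynomial.bind₁
        ![-(X 2 : MvPolynomial (Fin 3) ℂ), C Complex.I * X 1, X 0]
        (quarticQ a₁ ((starRingEnd ℂ) a₂) ((starRingEnd ℂ) a₃)) = quarticQ a₁ a₂ a₃ := by
  have hc : (starRingEnd ℂ) a₂ * (starRingEnd ℂ) a₃ = a₂ * a₃ := by
    obtain ⟨r, hr⟩ := hreal
    rw [← _root_.map_mul, ← hr, Complex.conj_ofReal]
  have ha₂' : (starRingEnd ℂ) a₂ ≠ 0 := by simpa using ha₂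
  have ha₃' : (starRingEnd ℂ) a₃ ≠ 0 := by simpa using ha₃
  have ha₁' : (a₁ : ℂ) ≠ 0 := by exact_mod_cast ha₁
  apply MvPolynomial.funext
  intro v
  rw [eval_bind_mu', eval_quarticQ', eval_quarticQ']
  simp only [Matrix.cons_val_zero, Matrix.cons_val_one, Matrix.head_cons,
    Matrix.cons_val_two, Matrix.tail_cons, Complex.conj_conj]
  have h3 : (starRingEnd ℂ) a₃ = a₂ * a₃ * ((starRingEnd ℂ) a₂)⁻¹ := by
    field_simp
    linear_combination hc
  rw [h3]
  have hI4 : Complex.I ^ 4 = 1 := by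
    rw [show (4:ℕ) = 2*2 from rfl, pow_mul, Complex.I_sq]; norm_num
  have hI2 : Complex.I ^ 2 = -1 := Complex.I_sq
  field_simp
  simp only [hI4, hI2]
  ring

lemma muGL_mulVec (v : Fin 3 → ℂ) :
    (muGL : Matrix (Fin 3) (Fin 3) ℂ) *ᵥ v = ![-(v 2), Complex.I * v 1, v 0] := by
  funext i
  fin_cases i <;>
    simp [muGL, Matrix.mulVec, dotProduct, Fin.sum_univ_three]


/-- for `a₁ ∈ ℝ ∖ {0}` and nonzero `a₂, a₃ ∈ ℂ` with `a₂a₃ ∈ ℝ`, the conjugate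
polynomial `Q̄` of `Q = Q_{a₁,a₂,a₃}` equals `Q_{a₁,ā₂,ā₃}`, one has the polynomial identity
`Q̄(−z, iy, x) = Q(x,y,z)`, and consequently the projective transformation
`μ(x:y:z) = (−z : iy : x)` maps the zero locus of `Q` bijectively onto that of `Q̄`. -/
theorem statement_11 (a₁ : ℝ) (ha₁ : a₁ ≠ 0) (a₂ a₃ : ℂ) (ha₂ : a₂ ≠ 0) (ha₃ : a₃ ≠ 0)
    (hreal : a₂ * a₃ ∈ Set.range ((↑) : ℝ → ℂ)) :
    MvPolynomial.map (starRingEnd ℂ) (quarticQ a₁ a₂ a₃) =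
      quarticQ a₁ ((starRingEnd ℂ) a₂) ((starRingEnd ℂ) a₃) ∧
    MvPolynomial.bind₁
        ![-(X 2 : MvPolynomial (Fin 3) ℂ), C Complex.I * X 1, X 0]
        (MvPolynomial.map (starRingEnd ℂ) (quarticQ a₁ a₂ a₃)) = quarticQ a₁ a₂ a₃ ∧
    MapsOnto muGL (zeroLocus (quarticQ a₁ a₂ a₃))
      (zeroLocus (MvPolynomial.map (starRingEnd ℂ) (quarticQ a₁ a₂ a₃))) := by
  have h1 := part1' a₁ a₂ a₃
  have h2 : MvPolynomial.bind₁
      ![-(X 2 : MvPolynomial (Fin 3) ℂ), C Complex.I * X 1, X 0]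
      (MvPolynomial.map (starRingEnd ℂ) (quarticQ a₁ a₂ a₃)) = quarticQ a₁ a₂ a₃ := by
    rw [h1]; exact part2' a₁ ha₁ a₂ a₃ ha₂ ha₃ hreal
  refine ⟨h1, h2, ?_⟩
  have key : ∀ p : Projectivization ℂ (Fin 3 → ℂ),
      p ∈ zeroLocus (quarticQ a₁ a₂ a₃) ↔
        projAction muGL p ∈ zeroLocus (MvPolynomial.map (starRingEnd ℂ) (quarticQ a₁ a₂ a₃)) := by
    intro p
    induction p using Projectivization.ind with
    | h v hv =>
      rw [h1, projAction_mk', mem_zeroLocus_mk', mem_zeroLocus_mk', muGL_mulVec,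
        ← eval_bind_mu', part2' a₁ ha₁ a₂ a₃ ha₂ ha₃ hreal]
  refine ⟨fun p hp => (key p).mp hp, ?_, ?_⟩
  · intro p _ q _ h
    have h' := congrArg (projAction muGL⁻¹) h
    rwa [projAction_inv_self', projAction_inv_self'] at h'
  · intro q hq
    have hq' : projAction muGL (projAction muGL⁻¹ q) = q := by
      have := projAction_inv_self' muGL⁻¹ q
      rwa [inv_inv] at this
    refine ⟨projAction muGL⁻¹ q, ?_, hq'⟩
    rw [key (projAction muGL⁻¹ q), hq']
    exact hq

end
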